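/- Let d ≥ 1, β > 0. Let φ₁ʳ : ℝ^d → [0,∞) be an even probability density of class C² with bounded derivatives up to order 2, belonging to L²(ℝ^d) and with finite first moment ∫ |x| φ₁ʳ(x) dx < ∞; set φ₁ := φ₁ʳ ∗ φ₁ʳ and for N ≥ 1 let φ_Nʳ(x) = N^β φ₁ʳ(N^{β/d} x) and φ_N(x) = N^β φ₁(N^{β/d} x). Let ρ : ℝ^d → [0,∞) be a probability density of class C² with bounded derivatives up to order 2 and ρ ∈ L²(ℝ^d), and let v ∈ C²(ℝ^d, ℝ^d) be bounded with bounded derivatives up to order 2. For points x₁,…,x_N ∈ ℝ^d define R_N := 2 [ (1/N) Σ_{k} ∇((ρ ∗ φ_Nʳ) − ρ)(x_k) · v(x_k) − ∫ ∇((ρ ∗ φ_Nʳ) − ρ)(x) · v(x) ρ(x) dx ] + 2 ∫ ρ(x) ∇( (S_N ∗ φ_N)(x) − (S_N ∗ φ_Nʳ)(x) ) · v(x) dx. Then there exists a constant C, depending only on d, β, φ₁ʳ, ρ and v (not on N or on the points x₁,…,x_N), such that |R_N| ≤ C N^{−β/d} for all N ≥ 1. -/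

import Mathlib

open MeasureTheory Finset RealInnerProductSpace Metric

noncomputable section
set_option synthInstance.maxHeartbeats 1000000
set_option maxHeartbeats 4000000

/-- Convolution `(f ∗ g)(x) = ∫ f(x-y) g(y) dy` on `ℝ^d`. -/
def conv {d : ℕ} (f g : EuclideanSpace ℝ (Fin d) → ℝ) :
    EuclideanSpace ℝ (Fin d) → ℝ :=
  fun x => ∫ y, f (x - y) * g y

/-- Rescaling `ψ_N(x) = N^β ψ(N^(β/d) x)`. -/
def scaleN {d : ℕ} (β : ℝ) (N : ℕ) (ψ : EuclideanSpace ℝ (Fin d) → ℝ) :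
    EuclideanSpace ℝ (Fin d) → ℝ :=
  fun x => (N : ℝ) ^ β * ψ (((N : ℝ) ^ (β / d)) • x)

namespace Stmt12

variable {d : ℕ}


variable {d : ℕ}

lemma inner_gradient_eq (f : EuclideanSpace ℝ (Fin d) → ℝ) (x w : EuclideanSpace ℝ (Fin d)) :
    ⟪gradient f x, w⟫ = fderiv ℝ f x w := by
  rw [gradient, InnerProductSpace.toDual_symm_apply]

-- scaling basics
lemma c_pos {β : ℝ} (hβ : 0 < β) {N : ℕ} (hN : 1 ≤ N) : (0:ℝ) < (N : ℝ) ^ (β / d) :=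
  Real.rpow_pos_of_pos (by exact_mod_cast Nat.lt_of_lt_of_le Nat.zero_lt_one hN) _

lemma c_pow_d (hd : 1 ≤ d) {β : ℝ} (hβ : 0 < β) {N : ℕ} (hN : 1 ≤ N) :
    ((N : ℝ) ^ (β / d)) ^ (d : ℕ) = (N : ℝ) ^ β := by
  have hN0 : (0:ℝ) ≤ (N:ℝ) := Nat.cast_nonneg N
  rw [← Real.rpow_natCast ((N : ℝ) ^ (β / d)) d, ← Real.rpow_mul hN0]
  congr 1
  field_simp

lemma integral_comp_c_smul (hd : 1 ≤ d) {β : ℝ} (hβ : 0 < β) {N : ℕ} (hN : 1 ≤ N)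
    (F : EuclideanSpace ℝ (Fin d) → ℝ) :
    ∫ x, F (((N : ℝ) ^ (β / d)) • x) = ((N : ℝ) ^ β)⁻¹ • ∫ x, F x := by
  rw [Measure.integral_comp_smul_of_nonneg (volume) F ((N : ℝ) ^ (β / d))
    (hR := le_of_lt (c_pos hβ hN))]
  rw [finrank_euclideanSpace_fin, c_pow_d hd hβ hN]

lemma scaleN_integral (hd : 1 ≤ d) {β : ℝ} (hβ : 0 < β) {N : ℕ} (hN : 1 ≤ N)
    (ψ : EuclideanSpace ℝ (Fin d) → ℝ) :
    ∫ x, scaleN β N ψ x = ∫ x, ψ x := by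
  have hNβ : ((N : ℝ) ^ β) ≠ 0 :=
    ne_of_gt (Real.rpow_pos_of_pos (by exact_mod_cast Nat.lt_of_lt_of_le Nat.zero_lt_one hN) _)
  simp only [scaleN]
  rw [integral_const_mul _, integral_comp_c_smul hd hβ hN ψ, smul_eq_mul]
  field_simp

lemma scaleN_moment (hd : 1 ≤ d) {β : ℝ} (hβ : 0 < β) {N : ℕ} (hN : 1 ≤ N)
    (ψ : EuclideanSpace ℝ (Fin d) → ℝ) :
    ∫ x, ‖x‖ * scaleN β N ψ x = (N : ℝ) ^ (-(β / (d:ℝ))) * ∫ x, ‖x‖ * ψ x := by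
  have hc : (0:ℝ) < (N : ℝ) ^ (β / d) := c_pos hβ hN
  have hNβ : (0:ℝ) < ((N : ℝ) ^ β) :=
    Real.rpow_pos_of_pos (by exact_mod_cast Nat.lt_of_lt_of_le Nat.zero_lt_one hN) _
  have key : ∀ x : EuclideanSpace ℝ (Fin d), ‖x‖ * scaleN β N ψ x
      = ((N : ℝ) ^ β) * (((N : ℝ) ^ (β / d))⁻¹ *
        ((fun u => ‖u‖ * ψ u) (((N : ℝ) ^ (β / d)) • x))) := by
    intro x
    simp only [scaleN]
    rw [norm_smul, Real.norm_eq_abs, abs_of_pos hc]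
    field_simp
  rw [integral_congr_ae (Filter.Eventually.of_forall key)]
  rw [integral_const_mul _, integral_const_mul _, integral_comp_c_smul hd hβ hN (fun u => ‖u‖ * ψ u)]
  rw [smul_eq_mul, Real.rpow_neg (Nat.cast_nonneg N)]
  field_simp

lemma scaleN_integrable {β : ℝ} (hβ : 0 < β) {N : ℕ} (hN : 1 ≤ N)
    {ψ : EuclideanSpace ℝ (Fin d) → ℝ} (hψ : Integrable ψ) :
    Integrable (scaleN β N ψ) := by
  have hc : ((N : ℝ) ^ (β / d)) ≠ 0 := ne_of_gt (c_pos hβ hN)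
  exact (hψ.comp_smul hc).const_mul _

lemma scaleN_moment_integrable (hd : 1 ≤ d) {β : ℝ} (hβ : 0 < β) {N : ℕ} (hN : 1 ≤ N)
    {ψ : EuclideanSpace ℝ (Fin d) → ℝ}
    (hψ : Integrable (fun x : EuclideanSpace ℝ (Fin d) => ‖x‖ * ψ x)) :
    Integrable (fun x => ‖x‖ * scaleN β N ψ x) := by
  have hc : (0:ℝ) < (N : ℝ) ^ (β / d) := c_pos hβ hN
  have key : ∀ x : EuclideanSpace ℝ (Fin d), ‖x‖ * scaleN β N ψ x
      = ((N : ℝ) ^ β * ((N : ℝ) ^ (β / d))⁻¹) *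
        ((fun u => ‖u‖ * ψ u) (((N : ℝ) ^ (β / d)) • x)) := by
    intro x
    simp only [scaleN]
    rw [norm_smul, Real.norm_eq_abs, abs_of_pos hc]
    field_simp
  rw [funext key]
  exact (hψ.comp_smul (ne_of_gt hc)).const_mul _






lemma hasFDerivAt_conv (ψ f : EuclideanSpace ℝ (Fin d) → ℝ) (hψ : Integrable ψ)
    (hf : ContDiff ℝ 1 f) {B₀ B₁ : ℝ}
    (hf0 : ∀ x, ‖f x‖ ≤ B₀) (hf1 : ∀ x, ‖fderiv ℝ f x‖ ≤ B₁) (x₀ : EuclideanSpace ℝ (Fin d)) :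
    HasFDerivAt (fun x => ∫ y, f (x - y) * ψ y)
      (∫ y, ψ y • fderiv ℝ f (x₀ - y)) x₀ := by
  have hfc : Continuous f := hf.continuous
  have hfd : Continuous (fderiv ℝ f) := hf.continuous_fderiv one_ne_zero
  apply hasFDerivAt_integral_of_dominated_of_fderiv_le
    (bound := fun a => B₁ * ‖ψ a‖)
    (F' := fun x a => ψ a • fderiv ℝ f (x - a)) (ball_mem_nhds _ one_pos)
  · filter_upwards with x
    exact ((hfc.comp (continuous_const.sub continuous_id)).aestronglyMeasurable).mul hψ.1
  · apply (hψ.norm.const_mul B₀).mono'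
    · exact ((hfc.comp (continuous_const.sub continuous_id)).aestronglyMeasurable).mul hψ.1
    · filter_upwards with a
      rw [norm_mul]
      exact mul_le_mul_of_nonneg_right (hf0 _) (norm_nonneg _)
  · exact hψ.1.smul ((hfd.comp (continuous_const.sub continuous_id)).aestronglyMeasurable)
  · filter_upwards with a x _
    rw [norm_smul (ψ a) (fderiv ℝ f (x - a)), mul_comm]
    exact mul_le_mul_of_nonneg_right (hf1 _) (norm_nonneg _)
  · exact hψ.norm.const_mul B₁
  · filter_upwards with a x _
    have h1 : HasFDerivAt (fun x : EuclideanSpace ℝ (Fin d) => x - a)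
        (ContinuousLinearMap.id ℝ (EuclideanSpace ℝ (Fin d))) x := (hasFDerivAt_id x).sub_const a
    have h2 := ((hf.differentiable one_ne_zero (x - a)).hasFDerivAt.comp x h1).mul_const' (ψ a)
    have h2' : HasFDerivAt (fun x => f (x - a) * ψ a)
        (ψ a • fderiv ℝ f (x - a)) x := by simpa using h2
    exact h2'

lemma hasFDerivAt_translate (ψ u : EuclideanSpace ℝ (Fin d) → ℝ) (hψ : Integrable ψ)
    (hu : ContDiff ℝ 1 u) {B₀ B₁ : ℝ}
    (hu0 : ∀ x, ‖u x‖ ≤ B₀) (hu1 : ∀ x, ‖fderiv ℝ u x‖ ≤ B₁) (b₀ : EuclideanSpace ℝ (Fin d)) :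
    HasFDerivAt (fun b => ∫ y, ψ y * u (y + b)) (∫ y, ψ y • fderiv ℝ u (y + b₀)) b₀ := by
  have huc : Continuous u := hu.continuous
  have hud : Continuous (fderiv ℝ u) := hu.continuous_fderiv one_ne_zero
  apply hasFDerivAt_integral_of_dominated_of_fderiv_le
    (bound := fun a => B₁ * ‖ψ a‖)
    (F' := fun b a => ψ a • fderiv ℝ u (a + b)) (ball_mem_nhds _ one_pos)
  · filter_upwards with b
    exact hψ.1.mul ((huc.comp (continuous_id.add continuous_const)).aestronglyMeasurable)
  · apply (hψ.norm.const_mul B₀).mono'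
    · exact hψ.1.mul ((huc.comp (continuous_id.add continuous_const)).aestronglyMeasurable)
    · filter_upwards with a
      rw [norm_mul, mul_comm ‖ψ a‖]
      exact mul_le_mul_of_nonneg_right (hu0 _) (norm_nonneg _)
  · exact hψ.1.smul ((hud.comp (continuous_id.add continuous_const)).aestronglyMeasurable)
  · filter_upwards with a x _
    rw [norm_smul (ψ a) (fderiv ℝ u (a + x)), mul_comm]
    exact mul_le_mul_of_nonneg_right (hu1 _) (norm_nonneg _)
  · exact hψ.norm.const_mul B₁
  · filter_upwards with a b _
    have h1 : HasFDerivAt (fun b : EuclideanSpace ℝ (Fin d) => a + b)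
        (ContinuousLinearMap.id ℝ (EuclideanSpace ℝ (Fin d))) b := by
      simpa using (hasFDerivAt_id b).const_add a
    have h2 := ((hu.differentiable one_ne_zero (a + b)).hasFDerivAt.comp b h1).const_mul (ψ a)
    have h2' : HasFDerivAt (fun b => ψ a * u (a + b))
        (ψ a • fderiv ℝ u (a + b)) b := by simpa using h2
    exact h2'

lemma hasFDerivAt_shift (ψ : EuclideanSpace ℝ (Fin d) → ℝ)
    {Dψ : EuclideanSpace ℝ (Fin d) → EuclideanSpace ℝ (Fin d) →L[ℝ] ℝ}
    (hDc : Continuous Dψ) (hD : ∀ z, HasFDerivAt ψ (Dψ z) z)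
    {B₀ B₁ : ℝ} (hB0 : ∀ z, ‖ψ z‖ ≤ B₀) (hB1 : ∀ z, ‖Dψ z‖ ≤ B₁)
    (u : EuclideanSpace ℝ (Fin d) → ℝ) (hu_cont : Continuous u) (hu_int : Integrable u)
    (b₀ : EuclideanSpace ℝ (Fin d)) :
    HasFDerivAt (fun b => ∫ x, ψ (x - b) * u x) (∫ x, -(u x • Dψ (x - b₀))) b₀ := by
  have hψc : Continuous ψ := by
    have : ∀ z, ContinuousAt ψ z := fun z => (hD z).continuousAt
    exact continuous_iff_continuousAt.2 this
  apply hasFDerivAt_integral_of_dominated_of_fderiv_le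
    (bound := fun a => B₁ * ‖u a‖)
    (F' := fun b a => -(u a • Dψ (a - b))) (ball_mem_nhds _ one_pos)
  · filter_upwards with b
    exact ((hψc.comp (continuous_id.sub continuous_const)).aestronglyMeasurable).mul
      hu_cont.aestronglyMeasurable
  · apply (hu_int.norm.const_mul B₀).mono'
    · exact ((hψc.comp (continuous_id.sub continuous_const)).aestronglyMeasurable).mul
        hu_cont.aestronglyMeasurable
    · filter_upwards with a
      rw [norm_mul]
      exact mul_le_mul_of_nonneg_right (hB0 _) (norm_nonneg _)
  · exact (hu_cont.aestronglyMeasurable.smul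
      ((hDc.comp (continuous_id.sub continuous_const)).aestronglyMeasurable)).neg
  · filter_upwards with a b _
    rw [norm_neg, norm_smul (u a) (Dψ (a - b)), mul_comm]
    exact mul_le_mul_of_nonneg_right (hB1 _) (norm_nonneg _)
  · exact hu_int.norm.const_mul B₁
  · filter_upwards with a b _
    have h1 : HasFDerivAt (fun b : EuclideanSpace ℝ (Fin d) => a - b)
        (-(ContinuousLinearMap.id ℝ (EuclideanSpace ℝ (Fin d)))) b := by
      simpa using (hasFDerivAt_id b).const_sub a
    have h2 := ((hD (a - b)).comp b h1).mul_const' (u a)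
    convert h2 using 1
    · rfl
    · rfl
    · ext w
      simp [mul_comm]




-- Integration by parts
lemma ibp (ψ : EuclideanSpace ℝ (Fin d) → ℝ) (hψ_int : Integrable ψ)
    {Dψ : EuclideanSpace ℝ (Fin d) → EuclideanSpace ℝ (Fin d) →L[ℝ] ℝ}
    (hDc : Continuous Dψ) (hD : ∀ z, HasFDerivAt ψ (Dψ z) z)
    {B₀ B₁ : ℝ} (hB0 : ∀ z, ‖ψ z‖ ≤ B₀) (hB1 : ∀ z, ‖Dψ z‖ ≤ B₁)
    (u : EuclideanSpace ℝ (Fin d) → ℝ) (hu : ContDiff ℝ 1 u) (hu_int : Integrable u)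
    {Bu₀ Bu₁ : ℝ} (hu0 : ∀ x, ‖u x‖ ≤ Bu₀) (hu1 : ∀ x, ‖fderiv ℝ u x‖ ≤ Bu₁)
    (b w : EuclideanSpace ℝ (Fin d)) :
    ∫ x, u x * Dψ (x - b) w = - ∫ y, ψ y * fderiv ℝ u (y + b) w := by
  have hψc : Continuous ψ := continuous_iff_continuousAt.2 fun z => (hD z).continuousAt
  have h1 := hasFDerivAt_shift ψ hDc hD hB0 hB1 u hu.continuous hu_int b
  have h2 := hasFDerivAt_translate ψ u hψ_int hu hu0 hu1 b
  have heq : (fun b' : EuclideanSpace ℝ (Fin d) => ∫ y, ψ y * u (y + b'))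
      = fun b' => ∫ x, ψ (x - b') * u x := by
    funext b'
    rw [← integral_add_right_eq_self (fun x => ψ (x - b') * u x) b']
    simp
  rw [heq] at h2
  have hEq := h1.unique h2
  have hint1 : Integrable (fun x => -(u x • Dψ (x - b))) := by
    apply Integrable.neg
    apply (hu_int.norm.const_mul B₁).mono'
    · exact hu.continuous.aestronglyMeasurable.smul
        ((hDc.comp (continuous_id.sub continuous_const)).aestronglyMeasurable)
    · filter_upwards with x
      rw [norm_smul (u x) (Dψ (x - b)), mul_comm]
      exact mul_le_mul_of_nonneg_right (hB1 _) (norm_nonneg _)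
  have hint2 : Integrable (fun y => ψ y • fderiv ℝ u (y + b)) := by
    apply (hψ_int.norm.const_mul Bu₁).mono'
    · exact hψc.aestronglyMeasurable.smul
        (((hu.continuous_fderiv one_ne_zero).comp (continuous_id.add continuous_const)).aestronglyMeasurable)
    · filter_upwards with y
      rw [norm_smul (ψ y) (fderiv ℝ u (y + b)), mul_comm]
      exact mul_le_mul_of_nonneg_right (hu1 _) (norm_nonneg _)
  have happ := congrArg (fun L : EuclideanSpace ℝ (Fin d) →L[ℝ] ℝ => L w) hEq
  rw [ContinuousLinearMap.integral_apply hint1 w, ContinuousLinearMap.integral_apply hint2 w] at happ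
  simp only [ContinuousLinearMap.neg_apply, ContinuousLinearMap.smul_apply, smul_eq_mul] at happ
  rw [integral_neg] at happ
  linarith [happ]

-- the shear measurable equiv (y, u) ↦ (u, y - u)
def shearE (d : ℕ) : (EuclideanSpace ℝ (Fin d) × EuclideanSpace ℝ (Fin d)) ≃ᵐ
    (EuclideanSpace ℝ (Fin d) × EuclideanSpace ℝ (Fin d)) where
  toFun := fun p => (p.2, p.1 - p.2)
  invFun := fun q => (q.2 + q.1, q.1)
  left_inv := fun p => by simp
  right_inv := fun q => by simp
  measurable_toFun := (measurable_snd.prodMk (measurable_fst.sub measurable_snd))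
  measurable_invFun := ((measurable_snd.add measurable_fst).prodMk measurable_fst)

lemma shearE_measurePreserving (d : ℕ) :
    MeasurePreserving (shearE d) (volume.prod volume) (volume.prod volume) :=
  measurePreserving_prod_sub_swap volume volume

lemma keyB (ψ Φ h : EuclideanSpace ℝ (Fin d) → ℝ)
    (hψc : Continuous ψ) (hψi : Integrable ψ) (hψn : ∀ x, 0 ≤ ψ x) (hψ1 : ∫ x, ψ x = 1)
    (hψm : Integrable (fun x : EuclideanSpace ℝ (Fin d) => ‖x‖ * ψ x))
    (hΦ : ∀ x, Φ x = ∫ y, ψ (x - y) * ψ y)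
    (hhc : Continuous h) {M L : ℝ} (hM : ∀ x, ‖h x‖ ≤ M)
    (hL : 0 ≤ L) (hlip : ∀ a b, ‖h a - h b‖ ≤ L * ‖a - b‖) :
    ‖(∫ y, Φ y * h y) - ∫ y, ψ y * h y‖ ≤ L * ∫ y, ‖y‖ * ψ y := by
  set P : EuclideanSpace ℝ (Fin d) × EuclideanSpace ℝ (Fin d) → ℝ :=
    fun p => ψ p.1 * (ψ p.2 * h (p.2 + p.1)) with hP
  have hψabs : ∀ x, ‖ψ x‖ = ψ x := fun x => by
    rw [Real.norm_eq_abs, abs_of_nonneg (hψn x)]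
  have hPi : Integrable P (volume.prod volume) := by
    apply ((hψi.mul_prod hψi).const_mul M).mono'
    · exact ((hψc.comp continuous_fst).mul
        ((hψc.comp continuous_snd).mul (hhc.comp (continuous_snd.add continuous_fst)))).aestronglyMeasurable
    · filter_upwards with p
      rw [hP]
      simp only [norm_mul]
      rw [hψabs, hψabs]
      calc ψ p.1 * (ψ p.2 * ‖h (p.2 + p.1)‖) ≤ ψ p.1 * (ψ p.2 * M) := by
            apply mul_le_mul_of_nonneg_left (mul_le_mul_of_nonneg_left (hM _) (hψn _)) (hψn _)
        _ = M * (ψ p.1 * ψ p.2) := by ring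
  have hPs : Integrable (P ∘ (shearE d)) (volume.prod volume) :=
    ((shearE_measurePreserving d).integrable_comp_emb (shearE d).measurableEmbedding).2 hPi
  set K : EuclideanSpace ℝ (Fin d) → ℝ := fun u => ∫ t, ψ t * h (t + u) with hK
  -- A = ∫ u, ψ u * K u
  have stepA : (∫ y, Φ y * h y) = ∫ u, ψ u * K u := by
    have e1 : ∀ y : EuclideanSpace ℝ (Fin d), Φ y * h y = ∫ u, P ((shearE d) (y, u)) := by
      intro y
      rw [hΦ y, ← integral_mul_const]
      congr 1
      funext u
      show ψ (y - u) * ψ u * h y = ψ u * (ψ (y - u) * h (y - u + u))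
      rw [sub_add_cancel]
      ring
    rw [integral_congr_ae (Filter.Eventually.of_forall e1)]
    have hPs' : Integrable (Function.uncurry fun y u => P ((shearE d) (y, u)))
        (volume.prod volume) := hPs
    rw [integral_integral hPs']
    have e3 : (∫ z : EuclideanSpace ℝ (Fin d) × EuclideanSpace ℝ (Fin d),
        P ((shearE d) (z.1, z.2)) ∂(volume.prod volume)) = ∫ p, P p ∂(volume.prod volume) :=
      (shearE_measurePreserving d).integral_comp (shearE d).measurableEmbedding P
    rw [e3, integral_prod P hPi]
    congr 1
    funext u
    rw [hK, ← integral_const_mul]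
  have hKint : Integrable (fun u => ψ u * K u) := by
    have := hPi.integral_prod_left
    convert this using 1
    funext u
    rw [hP, hK]
    rw [← integral_const_mul]
  have base : (∫ y, ψ y * h y) = K 0 := by
    rw [hK]
    simp
  have hKconst : (∫ u, ψ u * K 0) = K 0 := by
    rw [integral_mul_const, hψ1, one_mul]
  have diff : (∫ y, Φ y * h y) - (∫ y, ψ y * h y) = ∫ u, ψ u * (K u - K 0) := by
    have e4 : (∫ u, ψ u * (K u - K 0)) = (∫ u, ψ u * K u) - ∫ u, ψ u * K 0 := by
      rw [← integral_sub hKint (hψi.mul_const (K 0))]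
      congr 1
      funext u
      ring
    rw [stepA, base, e4, hKconst]
  have Kdiff : ∀ u : EuclideanSpace ℝ (Fin d), ‖K u - K 0‖ ≤ L * ‖u‖ := by
    intro u
    have hint_u : ∀ w : EuclideanSpace ℝ (Fin d), Integrable (fun t => ψ t * h (t + w)) := by
      intro w
      apply (hψi.norm.const_mul M).mono'
      · exact (hψc.mul (hhc.comp (continuous_id.add continuous_const))).aestronglyMeasurable
      · filter_upwards with t
        rw [norm_mul, mul_comm]
        exact mul_le_mul_of_nonneg_right (hM _) (norm_nonneg _)
    have e3 : K u - K 0 = ∫ t, ψ t * (h (t + u) - h (t + 0)) := by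
      rw [hK, ← integral_sub (hint_u u) (hint_u 0)]
      congr 1
      funext t
      ring
    rw [e3]
    calc ‖∫ t, ψ t * (h (t + u) - h (t + 0))‖ ≤ ∫ t, ‖ψ t * (h (t + u) - h (t + 0))‖ :=
          norm_integral_le_integral_norm _
      _ ≤ ∫ t, (L * ‖u‖) * ψ t := by
          apply integral_mono_of_nonneg
          · filter_upwards with t; positivity
          · exact hψi.const_mul _
          · filter_upwards with t
            rw [norm_mul, hψabs]
            calc ψ t * ‖h (t + u) - h (t + 0)‖ ≤ ψ t * (L * ‖u‖) := by
                  apply mul_le_mul_of_nonneg_left _ (hψn t)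
                  calc ‖h (t + u) - h (t + 0)‖ ≤ L * ‖(t + u) - (t + 0)‖ := hlip _ _
                    _ = L * ‖u‖ := by rw [add_zero]; congr 2; abel
              _ = (L * ‖u‖) * ψ t := by ring
      _ = L * ‖u‖ := by rw [integral_const_mul, hψ1, mul_one]
  rw [diff]
  calc ‖∫ u, ψ u * (K u - K 0)‖ ≤ ∫ u, ‖ψ u * (K u - K 0)‖ := norm_integral_le_integral_norm _
    _ ≤ ∫ u, L * (‖u‖ * ψ u) := by
        apply integral_mono_of_nonneg
        · filter_upwards with u; positivity
        · exact hψm.const_mul L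
        · filter_upwards with u
          rw [norm_mul, hψabs]
          calc ψ u * ‖K u - K 0‖ ≤ ψ u * (L * ‖u‖) := mul_le_mul_of_nonneg_left (Kdiff u) (hψn u)
            _ = L * (‖u‖ * ψ u) := by ring
    _ = L * ∫ u, ‖u‖ * ψ u := integral_const_mul _ _



-- fderiv as curried iterated derivative
lemma fderiv_eq_curry {F : Type*} [NormedAddCommGroup F] [NormedSpace ℝ F]
    (f : EuclideanSpace ℝ (Fin d) → F) (x : EuclideanSpace ℝ (Fin d)) :
    fderiv ℝ f x = (continuousMultilinearCurryFin1 ℝ (EuclideanSpace ℝ (Fin d)) F)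
      (iteratedFDeriv ℝ 1 f x) := by
  ext w
  rw [continuousMultilinearCurryFin1_apply, iteratedFDeriv_one_apply]
  rfl

lemma norm_fderiv_eq {F : Type*} [NormedAddCommGroup F] [NormedSpace ℝ F]
    (f : EuclideanSpace ℝ (Fin d) → F) (x : EuclideanSpace ℝ (Fin d)) :
    ‖fderiv ℝ f x‖ = ‖iteratedFDeriv ℝ 1 f x‖ := by
  rw [fderiv_eq_curry, LinearIsometryEquiv.norm_map]

lemma norm_fderiv_sub_le {F : Type*} [NormedAddCommGroup F] [NormedSpace ℝ F]
    (f : EuclideanSpace ℝ (Fin d) → F) (hf : ContDiff ℝ 2 f) {B : ℝ}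
    (hB : ∀ x, ‖iteratedFDeriv ℝ 2 f x‖ ≤ B) (a b : EuclideanSpace ℝ (Fin d)) :
    ‖fderiv ℝ f a - fderiv ℝ f b‖ ≤ B * ‖a - b‖ := by
  have hdiff : ∀ x ∈ (Set.univ : Set (EuclideanSpace ℝ (Fin d))),
      DifferentiableAt ℝ (iteratedFDeriv ℝ 1 f) x := fun x _ =>
    (hf.differentiable_iteratedFDeriv (by norm_num)) x
  have hb : ∀ x ∈ (Set.univ : Set (EuclideanSpace ℝ (Fin d))),
      ‖fderiv ℝ (iteratedFDeriv ℝ 1 f) x‖ ≤ B := fun x _ => by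
    rw [norm_fderiv_iteratedFDeriv]
    exact hB x
  have lip := convex_univ.norm_image_sub_le_of_norm_fderiv_le hdiff hb
    (Set.mem_univ b) (Set.mem_univ a)
  rw [fderiv_eq_curry f a, fderiv_eq_curry f b, ← LinearIsometryEquiv.map_sub,
    LinearIsometryEquiv.norm_map]
  exact lip

-- shear (x, y) ↦ (x - y, y)
def shearE2 (d : ℕ) : (EuclideanSpace ℝ (Fin d) × EuclideanSpace ℝ (Fin d)) ≃ᵐ
    (EuclideanSpace ℝ (Fin d) × EuclideanSpace ℝ (Fin d)) where
  toFun := fun p => (p.1 - p.2, p.2)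
  invFun := fun q => (q.1 + q.2, q.2)
  left_inv := fun p => by simp
  right_inv := fun q => by simp
  measurable_toFun := ((measurable_fst.sub measurable_snd).prodMk measurable_snd)
  measurable_invFun := ((measurable_fst.add measurable_snd).prodMk measurable_snd)

lemma shearE2_measurePreserving (d : ℕ) :
    MeasurePreserving (shearE2 d) (volume.prod volume) (volume.prod volume) :=
  measurePreserving_sub_prod volume volume

lemma conv_integrable {f g : EuclideanSpace ℝ (Fin d) → ℝ}
    (hf : Integrable f) (hg : Integrable g) : Integrable (conv f g) := by
  have hQ : Integrable ((fun q : EuclideanSpace ℝ (Fin d) × EuclideanSpace ℝ (Fin d) =>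
      f q.1 * g q.2) ∘ (shearE2 d)) (volume.prod volume) :=
    ((shearE2_measurePreserving d).integrable_comp_emb
      (shearE2 d).measurableEmbedding).2 (hf.mul_prod hg)
  have := hQ.integral_prod_left
  exact this

-- scaling of the self-convolution
lemma scaleN_conv (hd : 1 ≤ d) {β : ℝ} (hβ : 0 < β) {N : ℕ} (hN : 1 ≤ N)
    (f : EuclideanSpace ℝ (Fin d) → ℝ) (x : EuclideanSpace ℝ (Fin d)) :
    scaleN β N (conv f f) x = ∫ y, scaleN β N f (x - y) * scaleN β N f y := by
  have hNβ : (0:ℝ) < ((N : ℝ) ^ β) :=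
    Real.rpow_pos_of_pos (by exact_mod_cast Nat.lt_of_lt_of_le Nat.zero_lt_one hN) _
  set c : ℝ := (N : ℝ) ^ (β / d) with hc
  have key : ∀ y : EuclideanSpace ℝ (Fin d), scaleN β N f (x - y) * scaleN β N f y
      = ((N:ℝ)^β * (N:ℝ)^β) * ((fun u => f (c • x - u) * f u) (c • y)) := by
    intro y
    simp only [scaleN, ← hc]
    rw [smul_sub]
    ring
  rw [integral_congr_ae (Filter.Eventually.of_forall key), integral_const_mul,
    integral_comp_c_smul hd hβ hN (fun u => f (c • x - u) * f u)]
  simp only [scaleN, conv, ← hc, smul_eq_mul]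
  field_simp

-- coordinate bound
lemma coord_abs_le_norm (y : EuclideanSpace ℝ (Fin d)) (i : Fin d) : |y i| ≤ ‖y‖ := by
  have h := abs_real_inner_le_norm (EuclideanSpace.single i (1:ℝ)) y
  rw [EuclideanSpace.inner_single_left, EuclideanSpace.norm_single] at h
  simpa using h

-- expansion of a functional applied to a vector
lemma clm_apply_expand (L : EuclideanSpace ℝ (Fin d) →L[ℝ] ℝ) (y : EuclideanSpace ℝ (Fin d)) :
    L y = ∑ i, y i * L (EuclideanSpace.single i 1) := by
  conv_lhs => rw [← (EuclideanSpace.basisFun (Fin d) ℝ).sum_repr y]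
  rw [map_sum]
  refine Finset.sum_congr rfl fun i _ => ?_
  rw [ContinuousLinearMap.map_smul]
  simp [EuclideanSpace.basisFun_repr, EuclideanSpace.basisFun_apply, smul_eq_mul]

-- a uniform bound on iterated derivatives up to order 2
lemma bdd_all {F : Type*} [NormedAddCommGroup F] [NormedSpace ℝ F]
    (f : EuclideanSpace ℝ (Fin d) → F)
    (hb : ∀ i : ℕ, i ≤ 2 → ∃ B, ∀ x, ‖iteratedFDeriv ℝ i f x‖ ≤ B) :
    ∃ C, 0 ≤ C ∧ ∀ i : ℕ, i ≤ 2 → ∀ x, ‖iteratedFDeriv ℝ i f x‖ ≤ C := by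
  obtain ⟨B0, h0⟩ := hb 0 (by norm_num)
  obtain ⟨B1, h1⟩ := hb 1 (by norm_num)
  obtain ⟨B2, h2⟩ := hb 2 le_rfl
  refine ⟨max 0 (max B0 (max B1 B2)), le_max_left _ _, fun i hi x => ?_⟩
  interval_cases i
  · exact le_trans (h0 x) (le_max_of_le_right (le_max_of_le_left le_rfl))
  · exact le_trans (h1 x) (le_max_of_le_right (le_max_of_le_right (le_max_left _ _)))
  · exact le_trans (h2 x) (le_max_of_le_right (le_max_of_le_right (le_max_right _ _)))

-- bound on second derivative of a product
lemma itfd_mul_bound {u w : EuclideanSpace ℝ (Fin d) → ℝ}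
    (hu : ContDiff ℝ 2 u) (hw : ContDiff ℝ 2 w)
    {Cu Cw : ℝ} (hCu : ∀ i : ℕ, i ≤ 2 → ∀ x, ‖iteratedFDeriv ℝ i u x‖ ≤ Cu)
    (hCw : ∀ i : ℕ, i ≤ 2 → ∀ x, ‖iteratedFDeriv ℝ i w x‖ ≤ Cw)
    (hCu0 : 0 ≤ Cu) (hCw0 : 0 ≤ Cw) {n : ℕ} (hn : n ≤ 2) (x : EuclideanSpace ℝ (Fin d)) :
    ‖iteratedFDeriv ℝ n (fun y => u y * w y) x‖ ≤ 12 * (Cu * Cw) := by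
  have h := norm_iteratedFDeriv_mul_le (𝕜 := ℝ) hu hw x (n := n) (by exact_mod_cast hn)
  refine h.trans ?_
  have hterm : ∀ j ∈ Finset.range (n + 1),
      (n.choose j : ℝ) * ‖iteratedFDeriv ℝ j u x‖ * ‖iteratedFDeriv ℝ (n - j) w x‖
        ≤ 4 * (Cu * Cw) := by
    intro j hj
    have hj2 : j ≤ 2 := le_trans (Nat.le_of_lt_succ (Finset.mem_range.1 hj)) hn
    have hch : (n.choose j : ℝ) ≤ 4 := by
      have h1 : n.choose j ≤ 4 :=
        le_trans (Nat.choose_le_pow n j) (le_trans (Nat.pow_le_pow_left hn j)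
          (le_trans (Nat.pow_le_pow_right (by norm_num) hj2) (by norm_num)))
      exact_mod_cast h1
    have hnj2 : n - j ≤ 2 := le_trans (Nat.sub_le _ _) hn
    calc (n.choose j : ℝ) * ‖iteratedFDeriv ℝ j u x‖ * ‖iteratedFDeriv ℝ (n - j) w x‖
        ≤ 4 * Cu * Cw := by
          apply mul_le_mul (mul_le_mul hch (hCu j hj2 x) (norm_nonneg _) (by norm_num))
            (hCw _ hnj2 x) (norm_nonneg _)
          positivity
      _ = 4 * (Cu * Cw) := by ring
  calc (∑ j ∈ Finset.range (n + 1), (n.choose j : ℝ) * ‖iteratedFDeriv ℝ j u x‖ *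
        ‖iteratedFDeriv ℝ (n - j) w x‖) ≤ ∑ _j ∈ Finset.range (n + 1), 4 * (Cu * Cw) :=
        Finset.sum_le_sum hterm
    _ = (n + 1 : ℕ) * (4 * (Cu * Cw)) := by rw [Finset.sum_const, Finset.card_range]; simp
    _ ≤ 3 * (4 * (Cu * Cw)) := by
        have : ((n:ℝ) + 1) ≤ 3 := by exact_mod_cast Nat.succ_le_succ hn
        apply mul_le_mul_of_nonneg_right _ (by positivity)
        exact_mod_cast this
    _ = 12 * (Cu * Cw) := by ring


end Stmt12
open Stmt12 in
theorem statement12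
    (d : ℕ) (hd : 1 ≤ d) (β : ℝ) (hβ : 0 < β)
    (φ₁r : EuclideanSpace ℝ (Fin d) → ℝ)
    (hφ_even : ∀ x, φ₁r (-x) = φ₁r x)
    (hφ_nonneg : ∀ x, 0 ≤ φ₁r x)
    (hφ_int : Integrable φ₁r)
    (hφ_one : ∫ x, φ₁r x = 1)
    (hφ_smooth : ContDiff ℝ 2 φ₁r)
    (hφ_derivs_bdd : ∀ i : ℕ, i ≤ 2 → ∃ B, ∀ x, ‖iteratedFDeriv ℝ i φ₁r x‖ ≤ B)
    (hφ_L2 : MemLp φ₁r 2 (volume : Measure (EuclideanSpace ℝ (Fin d))))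
    (hφ_mom : Integrable fun x : EuclideanSpace ℝ (Fin d) => ‖x‖ * φ₁r x)
    (ρ : EuclideanSpace ℝ (Fin d) → ℝ)
    (hρ_nonneg : ∀ x, 0 ≤ ρ x)
    (hρ_int : Integrable ρ)
    (hρ_one : ∫ x, ρ x = 1)
    (hρ_smooth : ContDiff ℝ 2 ρ)
    (hρ_derivs_bdd : ∀ i : ℕ, i ≤ 2 → ∃ B, ∀ x, ‖iteratedFDeriv ℝ i ρ x‖ ≤ B)
    (hρ_L2 : MemLp ρ 2 (volume : Measure (EuclideanSpace ℝ (Fin d))))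
    (v : EuclideanSpace ℝ (Fin d) → EuclideanSpace ℝ (Fin d))
    (hv_smooth : ContDiff ℝ 2 v)
    (hv_derivs_bdd : ∀ i : ℕ, i ≤ 2 → ∃ B, ∀ x, ‖iteratedFDeriv ℝ i v x‖ ≤ B) :
    ∃ C : ℝ, ∀ N : ℕ, 1 ≤ N → ∀ xs : Fin N → EuclideanSpace ℝ (Fin d),
      |2 * ((1 / (N : ℝ)) * ∑ k,
            ⟪gradient (fun z => conv ρ (scaleN β N φ₁r) z - ρ z) (xs k), v (xs k)⟫
          - ∫ x, ⟪gradient (fun z => conv ρ (scaleN β N φ₁r) z - ρ z) x, v x⟫ * ρ x)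
        + 2 * ∫ x, ρ x *
            ⟪gradient (fun z => (1 / (N : ℝ)) * ∑ l,
                (scaleN β N (conv φ₁r φ₁r) (z - xs l) - scaleN β N φ₁r (z - xs l))) x,
              v x⟫|
      ≤ C * (N : ℝ) ^ (-(β / d)) := by
  classical
  obtain ⟨Cφ, hCφ0, hCφ⟩ := Stmt12.bdd_all φ₁r hφ_derivs_bdd
  obtain ⟨Cρ, hCρ0, hCρ⟩ := Stmt12.bdd_all ρ hρ_derivs_bdd
  obtain ⟨Cv, hCv0, hCv⟩ := Stmt12.bdd_all v hv_derivs_bdd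
  have hρb : ∀ x, ‖ρ x‖ ≤ Cρ := fun x => by
    rw [← norm_iteratedFDeriv_zero (𝕜 := ℝ)]; exact hCρ 0 (by norm_num) x
  have hρfd : ∀ x, ‖fderiv ℝ ρ x‖ ≤ Cρ := fun x => by
    rw [Stmt12.norm_fderiv_eq]; exact hCρ 1 (by norm_num) x
  have hφb : ∀ x, ‖φ₁r x‖ ≤ Cφ := fun x => by
    rw [← norm_iteratedFDeriv_zero (𝕜 := ℝ)]; exact hCφ 0 (by norm_num) x
  have hφfd : ∀ x, ‖fderiv ℝ φ₁r x‖ ≤ Cφ := fun x => by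
    rw [Stmt12.norm_fderiv_eq]; exact hCφ 1 (by norm_num) x
  have hvb : ∀ x, ‖v x‖ ≤ Cv := fun x => by
    rw [← norm_iteratedFDeriv_zero (𝕜 := ℝ)]; exact hCv 0 (by norm_num) x
  have hvc : Continuous v := hv_smooth.continuous
  have hρc : Continuous ρ := hρ_smooth.continuous
  set m : ℝ := ∫ x, ‖x‖ * φ₁r x with hm
  have hm0 : 0 ≤ m := integral_nonneg fun x => mul_nonneg (norm_nonneg _) (hφ_nonneg x)
  set e : Fin d → EuclideanSpace ℝ (Fin d) := fun i => EuclideanSpace.single i (1:ℝ) with he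
  set gfun : Fin d → EuclideanSpace ℝ (Fin d) → ℝ := fun i x => ρ x * (v x) i with hgfun
  -- coordinate functional
  have hLspec : ∀ i : Fin d, ∀ y : EuclideanSpace ℝ (Fin d),
      (innerSL ℝ (e i)) y = y i := by
    intro i y
    simp only [innerSL_apply_apply, he]
    rw [EuclideanSpace.inner_single_left]
    simp
  have hLnorm : ∀ i : Fin d, ‖innerSL ℝ (e i)‖ ≤ 1 := by
    intro i
    rw [innerSL_apply_norm, he, EuclideanSpace.norm_single]
    simp
  have hgieq : ∀ i, gfun i = fun x => ρ x * (innerSL ℝ (e i)) (v x) := by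
    intro i; funext x; rw [hLspec i (v x)]
  have hcoordc : ∀ i : Fin d, Continuous fun x => (v x) i := by
    intro i
    have : (fun x => (v x) i) = fun x => (innerSL ℝ (e i)) (v x) := by
      funext x; rw [hLspec i (v x)]
    rw [this]
    exact (innerSL ℝ (e i)).continuous.comp hvc
  have hvi_itfd : ∀ i : Fin d, ∀ n : ℕ, n ≤ 2 → ∀ x,
      ‖iteratedFDeriv ℝ n (fun x => (innerSL ℝ (e i)) (v x)) x‖ ≤ Cv := by
    intro i n hn x
    have hcomp := (innerSL ℝ (e i)).iteratedFDeriv_comp_left (x := x) hv_smooth.contDiffAt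
      (i := n) (by exact_mod_cast hn)
    have : (fun x => (innerSL ℝ (e i)) (v x)) = (innerSL ℝ (e i)) ∘ v := rfl
    rw [this, hcomp]
    calc ‖(innerSL ℝ (e i)).compContinuousMultilinearMap (iteratedFDeriv ℝ n v x)‖
        ≤ ‖innerSL ℝ (e i)‖ * ‖iteratedFDeriv ℝ n v x‖ :=
          ContinuousLinearMap.norm_compContinuousMultilinearMap_le _ _
      _ ≤ 1 * Cv := mul_le_mul (hLnorm i) (hCv n hn x) (norm_nonneg _) zero_le_one
      _ = Cv := one_mul Cv
  have hgi_smooth : ∀ i, ContDiff ℝ 2 (gfun i) := by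
    intro i
    rw [hgieq i]
    exact hρ_smooth.mul ((innerSL ℝ (e i)).contDiff.comp hv_smooth)
  have hgi_itfd : ∀ i, ∀ n : ℕ, n ≤ 2 → ∀ x,
      ‖iteratedFDeriv ℝ n (gfun i) x‖ ≤ 12 * (Cρ * Cv) := by
    intro i n hn x
    rw [hgieq i]
    exact Stmt12.itfd_mul_bound hρ_smooth ((innerSL ℝ (e i)).contDiff.comp hv_smooth)
      hCρ (hvi_itfd i) hCρ0 hCv0 hn x
  set Cg : ℝ := 12 * (Cρ * Cv) with hCgdef
  have hCg0 : (0:ℝ) ≤ Cg := by positivity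
  have hgic : ∀ i, Continuous (gfun i) := fun i => hρc.mul (hcoordc i)
  have hgi_bd : ∀ i x, ‖gfun i x‖ ≤ Cρ * Cv := by
    intro i x
    rw [hgfun]
    simp only [norm_mul]
    exact mul_le_mul (hρb x) (le_trans (Stmt12.coord_abs_le_norm (v x) i) (hvb x))
      (abs_nonneg _) hCρ0
  have hgi_int : ∀ i, Integrable (gfun i) := by
    intro i
    apply (hρ_int.mul_const Cv).mono' (hgic i).aestronglyMeasurable
    filter_upwards with x
    rw [hgfun]
    simp only [norm_mul]
    rw [Real.norm_eq_abs (ρ x), abs_of_nonneg (hρ_nonneg x)]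
    exact mul_le_mul_of_nonneg_left (le_trans (Stmt12.coord_abs_le_norm (v x) i) (hvb x))
      (hρ_nonneg x)
  have hgi_fd : ∀ i x, ‖fderiv ℝ (gfun i) x‖ ≤ Cg := fun i x => by
    rw [Stmt12.norm_fderiv_eq]; exact hgi_itfd i 1 (by norm_num) x
  have hgi_lip : ∀ i (a b : EuclideanSpace ℝ (Fin d)),
      ‖fderiv ℝ (gfun i) a - fderiv ℝ (gfun i) b‖ ≤ Cg * ‖a - b‖ := fun i a b =>
    Stmt12.norm_fderiv_sub_le (gfun i) (hgi_smooth i) (hgi_itfd i 2 le_rfl) a b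
  set divg : EuclideanSpace ℝ (Fin d) → ℝ := fun x => ∑ i, fderiv ℝ (gfun i) x (e i) with hdiv
  have hdivc : Continuous divg := by
    apply continuous_finset_sum
    intro i _
    exact ((hgi_smooth i).continuous_fderiv (by norm_num)).clm_apply continuous_const
  have henorm : ∀ i : Fin d, ‖e i‖ = 1 := by
    intro i; rw [he]; rw [EuclideanSpace.norm_single]; simp
  have hdiv_bd : ∀ x, ‖divg x‖ ≤ (d:ℝ) * Cg := by
    intro x
    rw [hdiv]
    calc ‖∑ i, fderiv ℝ (gfun i) x (e i)‖ ≤ ∑ i, ‖fderiv ℝ (gfun i) x (e i)‖ :=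
        norm_sum_le _ _
      _ ≤ ∑ _i : Fin d, Cg := by
          apply Finset.sum_le_sum
          intro i _
          calc ‖fderiv ℝ (gfun i) x (e i)‖ ≤ ‖fderiv ℝ (gfun i) x‖ * ‖e i‖ :=
              ContinuousLinearMap.le_opNorm _ _
            _ ≤ Cg * 1 := mul_le_mul (hgi_fd i x) (le_of_eq (henorm i)) (norm_nonneg _) hCg0
            _ = Cg := mul_one Cg
      _ = (d:ℝ) * Cg := by rw [Finset.sum_const, Finset.card_univ]; simp [nsmul_eq_mul]
  have hdiv_lip : ∀ a b, ‖divg a - divg b‖ ≤ ((d:ℝ) * Cg) * ‖a - b‖ := by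
    intro a b
    rw [hdiv]
    rw [← Finset.sum_sub_distrib]
    calc ‖∑ i, (fderiv ℝ (gfun i) a (e i) - fderiv ℝ (gfun i) b (e i))‖
        ≤ ∑ i, ‖fderiv ℝ (gfun i) a (e i) - fderiv ℝ (gfun i) b (e i)‖ := norm_sum_le _ _
      _ ≤ ∑ _i : Fin d, Cg * ‖a - b‖ := by
          apply Finset.sum_le_sum
          intro i _
          have : fderiv ℝ (gfun i) a (e i) - fderiv ℝ (gfun i) b (e i)
              = (fderiv ℝ (gfun i) a - fderiv ℝ (gfun i) b) (e i) := by simp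
          rw [this]
          calc ‖(fderiv ℝ (gfun i) a - fderiv ℝ (gfun i) b) (e i)‖
              ≤ ‖fderiv ℝ (gfun i) a - fderiv ℝ (gfun i) b‖ * ‖e i‖ :=
                ContinuousLinearMap.le_opNorm _ _
            _ ≤ (Cg * ‖a - b‖) * 1 := mul_le_mul (hgi_lip i a b) (le_of_eq (henorm i))
                (norm_nonneg _) (by positivity)
            _ = Cg * ‖a - b‖ := mul_one _
      _ = ((d:ℝ) * Cg) * ‖a - b‖ := by
          rw [Finset.sum_const, Finset.card_univ]; simp [nsmul_eq_mul]; ring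
  have hexpand : ∀ (L : EuclideanSpace ℝ (Fin d) →L[ℝ] ℝ) (x : EuclideanSpace ℝ (Fin d)),
      ρ x * L (v x) = ∑ i, gfun i x * L (e i) := by
    intro L x
    rw [Stmt12.clm_apply_expand L (v x), Finset.mul_sum]
    refine Finset.sum_congr rfl fun i _ => ?_
    rw [hgfun, he]
    ring
  refine ⟨(4 * (Cρ * Cv) + 2 * ((d:ℝ) * Cg)) * m, ?_⟩
  intro N hN xs
  have hNpos : (0:ℝ) < N := by exact_mod_cast hN
  have hNne : (N:ℝ) ≠ 0 := ne_of_gt hNpos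
  have hc0 : (0:ℝ) < (N:ℝ) ^ (β/(d:ℝ)) := Stmt12.c_pos hβ hN
  have hNβ0 : (0:ℝ) < (N:ℝ) ^ β := Real.rpow_pos_of_pos hNpos β
  set c : ℝ := (N:ℝ) ^ (β/(d:ℝ)) with hcdef
  set ψ : EuclideanSpace ℝ (Fin d) → ℝ := scaleN β N φ₁r with hψdef
  set Φ : EuclideanSpace ℝ (Fin d) → ℝ := scaleN β N (conv φ₁r φ₁r) with hΦdef
  have hψfun : ψ = fun x => (N:ℝ)^β * φ₁r (c • x) := rfl
  have hψint : Integrable ψ := Stmt12.scaleN_integrable hβ hN hφ_int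
  have hψsm : ContDiff ℝ 2 ψ := by
    rw [hψfun]
    exact contDiff_const.mul (hφ_smooth.comp (contDiff_id.const_smul c))
  have hψc : Continuous ψ := hψsm.continuous
  have hψn : ∀ x, 0 ≤ ψ x := fun x => mul_nonneg (le_of_lt hNβ0) (hφ_nonneg _)
  have hψ1 : ∫ x, ψ x = 1 := by
    rw [hψdef, Stmt12.scaleN_integral hd hβ hN φ₁r, hφ_one]
  have hψm_int : Integrable (fun x => ‖x‖ * ψ x) :=
    Stmt12.scaleN_moment_integrable hd hβ hN hφ_mom
  have hmψ : (∫ x, ‖x‖ * ψ x) = (N:ℝ) ^ (-(β/(d:ℝ))) * m := by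
    rw [hψdef, Stmt12.scaleN_moment hd hβ hN φ₁r, hm]
  have hψbd : ∀ x, ‖ψ x‖ ≤ (N:ℝ)^β * Cφ := by
    intro x
    rw [hψfun]
    simp only [norm_mul]
    rw [Real.norm_eq_abs ((N:ℝ)^β), abs_of_pos hNβ0]
    exact mul_le_mul_of_nonneg_left (hφb _) (le_of_lt hNβ0)
  -- derivative of ψ
  set Dψ : EuclideanSpace ℝ (Fin d) → EuclideanSpace ℝ (Fin d) →L[ℝ] ℝ :=
    fun z => ((N:ℝ)^β) • ((fderiv ℝ φ₁r (c • z)).comp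
      (c • ContinuousLinearMap.id ℝ (EuclideanSpace ℝ (Fin d)))) with hDψdef
  have hsmulderiv : ∀ z : EuclideanSpace ℝ (Fin d),
      HasFDerivAt (fun x : EuclideanSpace ℝ (Fin d) => c • x)
        (c • ContinuousLinearMap.id ℝ (EuclideanSpace ℝ (Fin d))) z :=
    fun z => (hasFDerivAt_id z).const_smul c
  have hψd : ∀ z, HasFDerivAt ψ (Dψ z) z := by
    intro z
    have h2 := ((hφ_smooth.differentiable two_ne_zero (c • z)).hasFDerivAt.comp z
      (hsmulderiv z)).const_mul ((N:ℝ)^β)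
    exact h2
  have hDψc : Continuous Dψ := by
    rw [hDψdef]
    refine (continuous_const (y := (N:ℝ)^β)).smul ?_
    exact (((ContinuousLinearMap.compL ℝ (EuclideanSpace ℝ (Fin d)) (EuclideanSpace ℝ (Fin d)) ℝ).flip
      (c • ContinuousLinearMap.id ℝ (EuclideanSpace ℝ (Fin d)))).continuous).comp
      ((hφ_smooth.continuous_fderiv (by norm_num)).comp (continuous_const_smul c))
  have hDψb : ∀ z, ‖Dψ z‖ ≤ (N:ℝ)^β * (Cφ * c) := by
    intro z
    have ee : Dψ z = ((N:ℝ)^β) • ((fderiv ℝ φ₁r (c • z)).comp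
        (c • ContinuousLinearMap.id ℝ (EuclideanSpace ℝ (Fin d)))) := by rw [hDψdef]
    rw [ee, norm_smul ((N:ℝ)^β) ((fderiv ℝ φ₁r (c • z)).comp
        (c • ContinuousLinearMap.id ℝ (EuclideanSpace ℝ (Fin d)))),
      Real.norm_eq_abs ((N:ℝ)^β), abs_of_pos hNβ0]
    apply mul_le_mul_of_nonneg_left _ (le_of_lt hNβ0)
    calc ‖(fderiv ℝ φ₁r (c • z)).comp (c • ContinuousLinearMap.id ℝ (EuclideanSpace ℝ (Fin d)))‖
        ≤ ‖fderiv ℝ φ₁r (c • z)‖ * ‖c • ContinuousLinearMap.id ℝ (EuclideanSpace ℝ (Fin d))‖ :=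
          ContinuousLinearMap.opNorm_comp_le _ _
      _ ≤ Cφ * c := by
          have hMcb : ‖c • ContinuousLinearMap.id ℝ (EuclideanSpace ℝ (Fin d))‖ ≤ c := by
            apply ContinuousLinearMap.opNorm_le_bound _ (le_of_lt hc0)
            intro x
            have e2 : (c • ContinuousLinearMap.id ℝ (EuclideanSpace ℝ (Fin d))) x = c • x := by
              simp
            rw [e2, norm_smul c x, Real.norm_eq_abs c, abs_of_pos hc0]
          exact mul_le_mul (hφfd _) hMcb (norm_nonneg _) hCφ0
  -- the unscaled convolution φ₁ = conv φ₁r φ₁r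
  have hφrnorm1 : ∫ y, ‖φ₁r y‖ = 1 := by
    rw [← hφ_one]
    congr 1
    funext y
    rw [Real.norm_eq_abs, abs_of_nonneg (hφ_nonneg y)]
  set Dφ₁ : EuclideanSpace ℝ (Fin d) → EuclideanSpace ℝ (Fin d) →L[ℝ] ℝ :=
    fun z => ∫ y, φ₁r y • fderiv ℝ φ₁r (z - y) with hDφ₁def
  have hφ₁d : ∀ z, HasFDerivAt (conv φ₁r φ₁r) (Dφ₁ z) z := fun z =>
    Stmt12.hasFDerivAt_conv φ₁r φ₁r hφ_int (hφ_smooth.of_le one_le_two) hφb hφfd z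
  have hDφ₁c : Continuous Dφ₁ := by
    rw [hDφ₁def]
    apply continuous_of_dominated (F := fun z y => φ₁r y • fderiv ℝ φ₁r (z - y))
      (bound := fun y => Cφ * ‖φ₁r y‖)
    · intro z
      exact hφ_int.1.smul
        (((hφ_smooth.continuous_fderiv (by norm_num)).comp
          (continuous_const.sub continuous_id)).aestronglyMeasurable)
    · intro z
      filter_upwards with y
      rw [norm_smul (φ₁r y) _, mul_comm]
      exact mul_le_mul_of_nonneg_right (hφfd _) (norm_nonneg _)
    · exact hφ_int.norm.const_mul Cφ
    · filter_upwards with y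
      exact Continuous.const_smul
        ((hφ_smooth.continuous_fderiv (by norm_num)).comp
          ((continuous_id.sub continuous_const))) (φ₁r y)
  have hDφ₁b : ∀ z, ‖Dφ₁ z‖ ≤ Cφ := by
    intro z
    rw [hDφ₁def]
    calc ‖∫ y, φ₁r y • fderiv ℝ φ₁r (z - y)‖ ≤ ∫ y, ‖φ₁r y • fderiv ℝ φ₁r (z - y)‖ :=
        norm_integral_le_integral_norm _
      _ ≤ ∫ y, Cφ * ‖φ₁r y‖ := by
          apply integral_mono_of_nonneg
          · filter_upwards with y; positivity
          · exact hφ_int.norm.const_mul Cφ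
          · filter_upwards with y
            rw [norm_smul (φ₁r y) _, mul_comm]
            exact mul_le_mul_of_nonneg_right (hφfd _) (norm_nonneg _)
      _ = Cφ := by rw [integral_const_mul, hφrnorm1, mul_one]
  have hφ₁c : Continuous (conv φ₁r φ₁r) :=
    continuous_iff_continuousAt.2 fun z => (hφ₁d z).continuousAt
  have hφ₁b : ∀ z, ‖conv φ₁r φ₁r z‖ ≤ Cφ := by
    intro z
    calc ‖conv φ₁r φ₁r z‖ ≤ ∫ y, ‖φ₁r (z - y) * φ₁r y‖ := norm_integral_le_integral_norm _
      _ ≤ ∫ y, Cφ * ‖φ₁r y‖ := by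
          apply integral_mono_of_nonneg
          · filter_upwards with y; positivity
          · exact hφ_int.norm.const_mul Cφ
          · filter_upwards with y
            rw [norm_mul]
            exact mul_le_mul_of_nonneg_right (hφb _) (norm_nonneg _)
      _ = Cφ := by rw [integral_const_mul, hφrnorm1, mul_one]
  have hφ₁i : Integrable (conv φ₁r φ₁r) := Stmt12.conv_integrable hφ_int hφ_int
  -- Φ facts
  have hΦfun : Φ = fun x => (N:ℝ)^β * (conv φ₁r φ₁r) (c • x) := rfl
  have hΦconv : ∀ x, Φ x = ∫ y, ψ (x - y) * ψ y := fun x =>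
    Stmt12.scaleN_conv hd hβ hN φ₁r x
  have hΦint : Integrable Φ := Stmt12.scaleN_integrable hβ hN hφ₁i
  have hΦc : Continuous Φ := by
    rw [hΦfun]
    exact continuous_const.mul (hφ₁c.comp (continuous_const_smul c))
  have hΦbd : ∀ x, ‖Φ x‖ ≤ (N:ℝ)^β * Cφ := by
    intro x
    rw [hΦfun]
    simp only [norm_mul]
    rw [Real.norm_eq_abs ((N:ℝ)^β), abs_of_pos hNβ0]
    exact mul_le_mul_of_nonneg_left (hφ₁b _) (le_of_lt hNβ0)
  set DΦ : EuclideanSpace ℝ (Fin d) → EuclideanSpace ℝ (Fin d) →L[ℝ] ℝ :=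
    fun z => ((N:ℝ)^β) • ((Dφ₁ (c • z)).comp
      (c • ContinuousLinearMap.id ℝ (EuclideanSpace ℝ (Fin d)))) with hDΦdef
  have hΦd : ∀ z, HasFDerivAt Φ (DΦ z) z := by
    intro z
    have h2 := ((hφ₁d (c • z)).comp z (hsmulderiv z)).const_mul ((N:ℝ)^β)
    exact h2
  have hDΦc : Continuous DΦ := by
    rw [hDΦdef]
    refine (continuous_const (y := (N:ℝ)^β)).smul ?_
    exact (((ContinuousLinearMap.compL ℝ (EuclideanSpace ℝ (Fin d)) (EuclideanSpace ℝ (Fin d)) ℝ).flip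
      (c • ContinuousLinearMap.id ℝ (EuclideanSpace ℝ (Fin d)))).continuous).comp
      (hDφ₁c.comp (continuous_const_smul c))
  have hDΦb : ∀ z, ‖DΦ z‖ ≤ (N:ℝ)^β * (Cφ * c) := by
    intro z
    have ee : DΦ z = ((N:ℝ)^β) • ((Dφ₁ (c • z)).comp
        (c • ContinuousLinearMap.id ℝ (EuclideanSpace ℝ (Fin d)))) := by rw [hDΦdef]
    rw [ee, norm_smul ((N:ℝ)^β) ((Dφ₁ (c • z)).comp
        (c • ContinuousLinearMap.id ℝ (EuclideanSpace ℝ (Fin d)))),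
      Real.norm_eq_abs ((N:ℝ)^β), abs_of_pos hNβ0]
    apply mul_le_mul_of_nonneg_left _ (le_of_lt hNβ0)
    calc ‖(Dφ₁ (c • z)).comp (c • ContinuousLinearMap.id ℝ (EuclideanSpace ℝ (Fin d)))‖
        ≤ ‖Dφ₁ (c • z)‖ * ‖c • ContinuousLinearMap.id ℝ (EuclideanSpace ℝ (Fin d))‖ :=
          ContinuousLinearMap.opNorm_comp_le _ _
      _ ≤ Cφ * c := by
          have hMcb : ‖c • ContinuousLinearMap.id ℝ (EuclideanSpace ℝ (Fin d))‖ ≤ c := by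
            apply ContinuousLinearMap.opNorm_le_bound _ (le_of_lt hc0)
            intro x
            have e2 : (c • ContinuousLinearMap.id ℝ (EuclideanSpace ℝ (Fin d))) x = c • x := by
              simp
            rw [e2, norm_smul c x, Real.norm_eq_abs c, abs_of_pos hc0]
          exact mul_le_mul (hDφ₁b _) hMcb (norm_nonneg _) hCφ0
  -- ============ TERM A ============
  have hψabs : ∀ x, ‖ψ x‖ = ψ x := fun x => by
    rw [Real.norm_eq_abs, abs_of_nonneg (hψn x)]
  set Dρψ : EuclideanSpace ℝ (Fin d) → EuclideanSpace ℝ (Fin d) →L[ℝ] ℝ :=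
    fun x => ∫ y, ψ y • fderiv ℝ ρ (x - y) with hDρψdef
  have hconvd : ∀ x, HasFDerivAt (fun z => conv ρ ψ z) (Dρψ x) x := fun x =>
    Stmt12.hasFDerivAt_conv ψ ρ hψint (hρ_smooth.of_le one_le_two) hρb hρfd x
  have hFd : ∀ x, fderiv ℝ (fun z => conv ρ ψ z - ρ z) x = Dρψ x - fderiv ℝ ρ x := fun x =>
    ((hconvd x).sub (hρ_smooth.differentiable two_ne_zero x).hasFDerivAt).fderiv
  have hkeyA : ∀ x, ‖Dρψ x - fderiv ℝ ρ x‖ ≤ Cρ * ((N:ℝ) ^ (-(β/(d:ℝ))) * m) := by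
    intro x
    have i1 : Integrable (fun y => ψ y • fderiv ℝ ρ (x - y)) := by
      apply (hψint.norm.const_mul Cρ).mono'
      · exact hψc.aestronglyMeasurable.smul
          (((hρ_smooth.continuous_fderiv (by norm_num)).comp
            (continuous_const.sub continuous_id)).aestronglyMeasurable)
      · filter_upwards with y
        rw [norm_smul (ψ y) (fderiv ℝ ρ (x - y)), mul_comm]
        exact mul_le_mul_of_nonneg_right (hρfd _) (norm_nonneg _)
    have i2 : Integrable (fun y => ψ y • fderiv ℝ ρ x) := hψint.smul_const _
    have e1 : fderiv ℝ ρ x = ∫ y, ψ y • fderiv ℝ ρ x := by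
      rw [integral_smul_const, hψ1, one_smul]
    have e2 : Dρψ x - fderiv ℝ ρ x = ∫ y, ψ y • (fderiv ℝ ρ (x - y) - fderiv ℝ ρ x) :=
      calc Dρψ x - fderiv ℝ ρ x
          = (∫ y, ψ y • fderiv ℝ ρ (x - y)) - ∫ y, ψ y • fderiv ℝ ρ x := by rw [← e1, hDρψdef]
        _ = ∫ y, (ψ y • fderiv ℝ ρ (x - y) - ψ y • fderiv ℝ ρ x) := (integral_sub i1 i2).symm
        _ = ∫ y, ψ y • (fderiv ℝ ρ (x - y) - fderiv ℝ ρ x) := by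
            congr 1
            funext y
            rw [smul_sub]
    rw [e2]
    calc ‖∫ y, ψ y • (fderiv ℝ ρ (x - y) - fderiv ℝ ρ x)‖
        ≤ ∫ y, ‖ψ y • (fderiv ℝ ρ (x - y) - fderiv ℝ ρ x)‖ := norm_integral_le_integral_norm _
      _ ≤ ∫ y, Cρ * (‖y‖ * ψ y) := by
          apply integral_mono_of_nonneg
          · filter_upwards with y; positivity
          · exact hψm_int.const_mul Cρ
          · filter_upwards with y
            rw [norm_smul (ψ y) (fderiv ℝ ρ (x - y) - fderiv ℝ ρ x), hψabs]
            have e3 : ‖fderiv ℝ ρ (x - y) - fderiv ℝ ρ x‖ ≤ Cρ * ‖y‖ := by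
              have := Stmt12.norm_fderiv_sub_le ρ hρ_smooth (hCρ 2 le_rfl) (x - y) x
              rw [sub_sub_cancel_left, norm_neg] at this
              exact this
            calc ψ y * ‖fderiv ℝ ρ (x - y) - fderiv ℝ ρ x‖ ≤ ψ y * (Cρ * ‖y‖) :=
                mul_le_mul_of_nonneg_left e3 (hψn y)
              _ = Cρ * (‖y‖ * ψ y) := by ring
      _ = Cρ * ((N:ℝ) ^ (-(β/(d:ℝ))) * m) := by rw [integral_const_mul, hmψ]
  have hptA : ∀ x, |⟪gradient (fun z => conv ρ ψ z - ρ z) x, v x⟫|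
      ≤ Cρ * ((N:ℝ) ^ (-(β/(d:ℝ))) * m) * Cv := by
    intro x
    rw [Stmt12.inner_gradient_eq, hFd x, ← Real.norm_eq_abs]
    calc ‖(Dρψ x - fderiv ℝ ρ x) (v x)‖ ≤ ‖Dρψ x - fderiv ℝ ρ x‖ * ‖v x‖ :=
        ContinuousLinearMap.le_opNorm _ _
      _ ≤ Cρ * ((N:ℝ) ^ (-(β/(d:ℝ))) * m) * Cv :=
        mul_le_mul (hkeyA x) (hvb x) (norm_nonneg _) (by positivity)
  set AA : ℝ := Cρ * ((N:ℝ) ^ (-(β/(d:ℝ))) * m) * Cv with hAAdef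
  have hAA0 : 0 ≤ AA := by
    rw [hAAdef]
    have : (0:ℝ) ≤ (N:ℝ) ^ (-(β/(d:ℝ))) := le_of_lt (Real.rpow_pos_of_pos hNpos _)
    positivity
  have hS : |(1 / (N:ℝ)) * ∑ k, ⟪gradient (fun z => conv ρ ψ z - ρ z) (xs k), v (xs k)⟫| ≤ AA := by
    rw [abs_mul]
    have h1 : |∑ k, ⟪gradient (fun z => conv ρ ψ z - ρ z) (xs k), v (xs k)⟫|
        ≤ ∑ k : Fin N, AA := by
      refine le_trans (Finset.abs_sum_le_sum_abs _ _) (Finset.sum_le_sum fun k _ => hptA (xs k))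
    rw [Finset.sum_const, Finset.card_univ, Fintype.card_fin, nsmul_eq_mul] at h1
    have h2 : |1 / (N:ℝ)| = 1 / (N:ℝ) := abs_of_pos (by positivity)
    rw [h2]
    calc (1 / (N:ℝ)) * |∑ k, ⟪gradient (fun z => conv ρ ψ z - ρ z) (xs k), v (xs k)⟫|
        ≤ (1 / (N:ℝ)) * ((N:ℝ) * AA) :=
          mul_le_mul_of_nonneg_left h1 (by positivity)
      _ = AA := by field_simp
  have hI : |∫ x, ⟪gradient (fun z => conv ρ ψ z - ρ z) x, v x⟫ * ρ x| ≤ AA := by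
    rw [← Real.norm_eq_abs]
    calc ‖∫ x, ⟪gradient (fun z => conv ρ ψ z - ρ z) x, v x⟫ * ρ x‖
        ≤ ∫ x, ‖⟪gradient (fun z => conv ρ ψ z - ρ z) x, v x⟫ * ρ x‖ :=
          norm_integral_le_integral_norm _
      _ ≤ ∫ x, AA * ρ x := by
          apply integral_mono_of_nonneg
          · filter_upwards with x; positivity
          · exact hρ_int.const_mul AA
          · filter_upwards with x
            rw [norm_mul, Real.norm_eq_abs (ρ x), abs_of_nonneg (hρ_nonneg x),
              Real.norm_eq_abs]
            exact mul_le_mul_of_nonneg_right (hptA x) (hρ_nonneg x)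
      _ = AA := by rw [integral_const_mul, hρ_one, mul_one]
  -- ============ TERM B ============
  set DG : EuclideanSpace ℝ (Fin d) → EuclideanSpace ℝ (Fin d) →L[ℝ] ℝ :=
    fun x => (1 / (N:ℝ)) • ∑ l, (DΦ (x - xs l) - Dψ (x - xs l)) with hDGdef
  have hGd : ∀ x, HasFDerivAt
      (fun z => (1 / (N:ℝ)) * ∑ l, (Φ (z - xs l) - ψ (z - xs l))) (DG x) x := by
    intro x
    have h0 : ∀ l : Fin N, HasFDerivAt (fun z => Φ (z - xs l) - ψ (z - xs l))
        (DΦ (x - xs l) - Dψ (x - xs l)) x := by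
      intro l
      have h1 : HasFDerivAt (fun z : EuclideanSpace ℝ (Fin d) => z - xs l)
          (ContinuousLinearMap.id ℝ (EuclideanSpace ℝ (Fin d))) x :=
        (hasFDerivAt_id x).sub_const _
      have h2 := (hΦd (x - xs l)).comp x h1
      have h3 := (hψd (x - xs l)).comp x h1
      have h4 := h2.sub h3
      exact h4
    have h5 := HasFDerivAt.fun_sum (fun l (_ : l ∈ Finset.univ) => h0 l)
    have h6 := h5.const_mul (1 / (N:ℝ))
    exact h6
  have hGrad : ∀ x, ⟪gradient (fun z => (1 / (N:ℝ)) *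
        ∑ l, (Φ (z - xs l) - ψ (z - xs l))) x, v x⟫
      = (1 / (N:ℝ)) * ∑ l, (DΦ (x - xs l) (v x) - Dψ (x - xs l) (v x)) := by
    intro x
    rw [Stmt12.inner_gradient_eq, (hGd x).fderiv, hDGdef]
    simp only [ContinuousLinearMap.smul_apply, ContinuousLinearMap.coe_sum',
      Finset.sum_apply, ContinuousLinearMap.sub_apply, smul_eq_mul]
  have hIntgen : ∀ (Dχ : EuclideanSpace ℝ (Fin d) → EuclideanSpace ℝ (Fin d) →L[ℝ] ℝ),
      Continuous Dχ → ∀ B : ℝ, (∀ z, ‖Dχ z‖ ≤ B) →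
      ∀ a, Integrable (fun x => ρ x * (Dχ (x - a)) (v x)) := by
    intro Dχ hc B hB a
    apply (hρ_int.mul_const (B * Cv)).mono'
    · exact (hρc.mul ((hc.comp (continuous_id.sub continuous_const)).clm_apply
        hvc)).aestronglyMeasurable
    · filter_upwards with x
      rw [norm_mul, Real.norm_eq_abs (ρ x), abs_of_nonneg (hρ_nonneg x)]
      apply mul_le_mul_of_nonneg_left _ (hρ_nonneg x)
      calc ‖(Dχ (x - a)) (v x)‖ ≤ ‖Dχ (x - a)‖ * ‖v x‖ := ContinuousLinearMap.le_opNorm _ _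
        _ ≤ B * Cv := mul_le_mul (hB (x - a)) (hvb x) (norm_nonneg _)
            (le_trans (norm_nonneg (Dχ (x - a))) (hB (x - a)))
  have hIBPgen : ∀ (χ : EuclideanSpace ℝ (Fin d) → ℝ)
      (Dχ : EuclideanSpace ℝ (Fin d) → EuclideanSpace ℝ (Fin d) →L[ℝ] ℝ),
      Integrable χ → Continuous Dχ → (∀ z, HasFDerivAt χ (Dχ z) z) →
      ∀ B₀ B₁ : ℝ, (∀ z, ‖χ z‖ ≤ B₀) → (∀ z, ‖Dχ z‖ ≤ B₁) →
      ∀ a : EuclideanSpace ℝ (Fin d),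
      (∫ x, ρ x * (Dχ (x - a)) (v x)) = - ∫ y, χ y * divg (y + a) := by
    intro χ Dχ hχi hDχc hχd B₀ B₁ hB0 hB1 a
    have hχc : Continuous χ := continuous_iff_continuousAt.2 fun z => (hχd z).continuousAt
    have hint_i : ∀ i : Fin d, Integrable (fun x => gfun i x * (Dχ (x - a)) (e i)) := by
      intro i
      apply (hρ_int.mul_const (Cv * B₁)).mono'
      · exact ((hgic i).mul ((hDχc.comp (continuous_id.sub continuous_const)).clm_apply
          continuous_const)).aestronglyMeasurable
      · filter_upwards with x
        rw [norm_mul]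
        have b1 : ‖gfun i x‖ ≤ ρ x * Cv := by
          rw [hgfun]
          simp only [norm_mul]
          rw [Real.norm_eq_abs (ρ x), abs_of_nonneg (hρ_nonneg x)]
          exact mul_le_mul_of_nonneg_left
            (le_trans (Stmt12.coord_abs_le_norm (v x) i) (hvb x)) (hρ_nonneg x)
        have b2 : ‖(Dχ (x - a)) (e i)‖ ≤ B₁ := by
          calc ‖(Dχ (x - a)) (e i)‖ ≤ ‖Dχ (x - a)‖ * ‖e i‖ :=
              ContinuousLinearMap.le_opNorm _ _
            _ ≤ B₁ * 1 := mul_le_mul (hB1 (x - a)) (le_of_eq (henorm i)) (norm_nonneg _)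
                (le_trans (norm_nonneg (Dχ (x - a))) (hB1 (x - a)))
            _ = B₁ := mul_one _
        calc ‖gfun i x‖ * ‖(Dχ (x - a)) (e i)‖ ≤ (ρ x * Cv) * B₁ :=
            mul_le_mul b1 b2 (norm_nonneg _) (mul_nonneg (hρ_nonneg x) hCv0)
          _ = ρ x * (Cv * B₁) := by ring
    have e1 : ∀ x, ρ x * (Dχ (x - a)) (v x) = ∑ i, gfun i x * (Dχ (x - a)) (e i) :=
      fun x => hexpand (Dχ (x - a)) x
    rw [integral_congr_ae (Filter.Eventually.of_forall e1),
      integral_finset_sum Finset.univ (fun i _ => hint_i i)]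
    have e2 : ∀ i : Fin d, (∫ x, gfun i x * (Dχ (x - a)) (e i))
        = - ∫ y, χ y * fderiv ℝ (gfun i) (y + a) (e i) := fun i =>
      Stmt12.ibp χ hχi hDχc hχd hB0 hB1 (gfun i) ((hgi_smooth i).of_le one_le_two)
        (hgi_int i) (hgi_bd i) (hgi_fd i) a (e i)
    rw [Finset.sum_congr rfl (fun i _ => e2 i)]
    have hint2_i : ∀ i : Fin d,
        Integrable (fun y => χ y * fderiv ℝ (gfun i) (y + a) (e i)) := by
      intro i
      apply (hχi.norm.const_mul Cg).mono'
      · exact (hχc.mul ((((hgi_smooth i).continuous_fderiv (by norm_num)).comp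
          (continuous_id.add continuous_const)).clm_apply
            continuous_const)).aestronglyMeasurable
      · filter_upwards with y
        rw [norm_mul, mul_comm]
        apply mul_le_mul_of_nonneg_right _ (norm_nonneg (χ y))
        calc ‖fderiv ℝ (gfun i) (y + a) (e i)‖ ≤ ‖fderiv ℝ (gfun i) (y + a)‖ * ‖e i‖ :=
            ContinuousLinearMap.le_opNorm _ _
          _ ≤ Cg * 1 := mul_le_mul (hgi_fd i _) (le_of_eq (henorm i)) (norm_nonneg _) hCg0
          _ = Cg := mul_one _
    rw [Finset.sum_neg_distrib, ← integral_finset_sum Finset.univ (fun i _ => hint2_i i)]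
    congr 1
    congr 1
    funext y
    simp only [hdiv, Finset.mul_sum]
  have hperl : ∀ a : EuclideanSpace ℝ (Fin d),
      |(∫ x, ρ x * (DΦ (x - a)) (v x)) - ∫ x, ρ x * (Dψ (x - a)) (v x)|
      ≤ ((d:ℝ) * Cg) * ((N:ℝ) ^ (-(β/(d:ℝ))) * m) := by
    intro a
    rw [hIBPgen Φ DΦ hΦint hDΦc hΦd _ _ hΦbd hDΦb a,
        hIBPgen ψ Dψ hψint hDψc hψd _ _ hψbd hDψb a]
    have e5 : (-(∫ y, Φ y * divg (y + a))) - (-(∫ y, ψ y * divg (y + a)))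
        = -((∫ y, Φ y * divg (y + a)) - (∫ y, ψ y * divg (y + a))) := by ring
    rw [e5, abs_neg, ← Real.norm_eq_abs]
    have hkb := Stmt12.keyB ψ Φ (fun y => divg (y + a)) hψc hψint hψn hψ1 hψm_int hΦconv
      (hdivc.comp (continuous_id.add continuous_const)) (M := (d:ℝ) * Cg)
      (fun y => hdiv_bd (y + a)) (L := (d:ℝ) * Cg) (by positivity)
      (fun y z => by
        have h7 := hdiv_lip (y + a) (z + a)
        simpa using h7)
    calc ‖(∫ y, Φ y * divg (y + a)) - ∫ y, ψ y * divg (y + a)‖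
        ≤ ((d:ℝ) * Cg) * ∫ y, ‖y‖ * ψ y := hkb
      _ = ((d:ℝ) * Cg) * ((N:ℝ) ^ (-(β/(d:ℝ))) * m) := by rw [hmψ]
  have hsplit : (∫ x, ρ x * ⟪gradient (fun z => (1 / (N:ℝ)) *
        ∑ l, (Φ (z - xs l) - ψ (z - xs l))) x, v x⟫)
      = (1 / (N:ℝ)) * ∑ l, ((∫ x, ρ x * (DΦ (x - xs l)) (v x))
          - ∫ x, ρ x * (Dψ (x - xs l)) (v x)) := by
    have e6 : ∀ x, ρ x * ⟪gradient (fun z => (1 / (N:ℝ)) *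
        ∑ l, (Φ (z - xs l) - ψ (z - xs l))) x, v x⟫
        = (1 / (N:ℝ)) * ∑ l, (ρ x * (DΦ (x - xs l)) (v x)
            - ρ x * (Dψ (x - xs l)) (v x)) := by
      intro x
      rw [hGrad x, mul_left_comm, Finset.mul_sum]
      simp only [mul_sub]
    rw [integral_congr_ae (Filter.Eventually.of_forall e6), integral_const_mul]
    congr 1
    rw [integral_finset_sum Finset.univ
      (f := fun l (x : EuclideanSpace ℝ (Fin d)) => ρ x * (DΦ (x - xs l)) (v x)
        - ρ x * (Dψ (x - xs l)) (v x))
      (fun l _ => ((hIntgen DΦ hDΦc _ hDΦb (xs l)).sub (hIntgen Dψ hDψc _ hDψb (xs l))))]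
    exact Finset.sum_congr rfl fun l _ => integral_sub (hIntgen DΦ hDΦc _ hDΦb (xs l))
      (hIntgen Dψ hDψc _ hDψb (xs l))
  have hB : |∫ x, ρ x * ⟪gradient (fun z => (1 / (N:ℝ)) *
        ∑ l, (Φ (z - xs l) - ψ (z - xs l))) x, v x⟫|
      ≤ ((d:ℝ) * Cg) * ((N:ℝ) ^ (-(β/(d:ℝ))) * m) := by
    rw [hsplit, abs_mul]
    have h1 : |∑ l, ((∫ x, ρ x * (DΦ (x - xs l)) (v x))
          - ∫ x, ρ x * (Dψ (x - xs l)) (v x))|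
        ≤ ∑ _l : Fin N, ((d:ℝ) * Cg) * ((N:ℝ) ^ (-(β/(d:ℝ))) * m) :=
      le_trans (Finset.abs_sum_le_sum_abs _ _) (Finset.sum_le_sum fun l _ => hperl (xs l))
    rw [Finset.sum_const, Finset.card_univ, Fintype.card_fin, nsmul_eq_mul] at h1
    rw [abs_of_pos (show (0:ℝ) < 1/(N:ℝ) by positivity)]
    calc (1/(N:ℝ)) * |∑ l, ((∫ x, ρ x * (DΦ (x - xs l)) (v x))
          - ∫ x, ρ x * (Dψ (x - xs l)) (v x))|
        ≤ (1/(N:ℝ)) * ((N:ℝ) * (((d:ℝ) * Cg) * ((N:ℝ) ^ (-(β/(d:ℝ))) * m))) :=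
          mul_le_mul_of_nonneg_left h1 (by positivity)
      _ = ((d:ℝ) * Cg) * ((N:ℝ) ^ (-(β/(d:ℝ))) * m) := by field_simp
  -- ============ FINAL ============
  refine le_trans (abs_add_le _ _) ?_
  rw [abs_mul, abs_mul, abs_two]
  have h1 := le_trans (abs_sub _ _) (add_le_add hS hI)
  refine le_trans (add_le_add (mul_le_mul_of_nonneg_left h1 (by norm_num))
    (mul_le_mul_of_nonneg_left hB (by norm_num))) (le_of_eq ?_)
  rw [hAAdef]
  ring
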